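/- arXiv:1502.03479 — 5 statements merged into one kernel-verified Lean document; each statement's English description precedes it below -/
import Mathlib

section
/- For every n ≥ 2 and every k with 1 ≤ k ≤ n, there exists a unique Lie algebra homomorphism d_k : L(P_n) → L(P_{n-1}) such that d_k(A_{i,j}) = A_{i,j} if i < j < k; d_k(A_{i,j}) = 0 if j = k; d_k(A_{i,j}) = A_{i,j-1} if i < k < j; d_k(A_{i,j}) = 0 if i = k; and d_k(A_{i,j}) = A_{i-1,j-1} if k < i < j. That is, the formula on generators of the free Lie algebra descends through the infinitesimal braid relations. -/
/-- Generating index set: pairs `(i, j)` with `1 ≤ i < j ≤ n` (1-indexed). -/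
abbrev PBGen (n : ℕ) : Type := {p : ℕ × ℕ // 0 < p.1 ∧ p.1 < p.2 ∧ p.2 ≤ n}

/-- The free Lie algebra over `ℤ` on the generators `A_{i,j}`, `1 ≤ i < j ≤ n`. -/
abbrev PBFree (n : ℕ) : Type := FreeLieAlgebra ℤ (PBGen n)

/-- The generator `A_{i,j}` of the free Lie algebra (junk value `0` out of range). -/
noncomputable def Agen (n i j : ℕ) : PBFree n :=
  if h : 0 < i ∧ i < j ∧ j ≤ n then FreeLieAlgebra.of ℤ (⟨(i, j), h⟩ : PBGen n) else 0

/-- The infinitesimal braid relations (horizontal 4T relations). -/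
def pbRels (n : ℕ) : Set (PBFree n) :=
  {x | (∃ i j s t : ℕ, (0 < i ∧ i < j ∧ j ≤ n) ∧ (0 < s ∧ s < t ∧ t ≤ n) ∧
          ({i, j} : Set ℕ) ∩ {s, t} = ∅ ∧ x = ⁅Agen n i j, Agen n s t⁆) ∨
       (∃ i j k : ℕ, 0 < i ∧ i < j ∧ j < k ∧ k ≤ n ∧
          x = ⁅Agen n i j, Agen n i k + Agen n j k⁆) ∨
       (∃ i j k : ℕ, 0 < i ∧ i < j ∧ j < k ∧ k ≤ n ∧
          x = ⁅Agen n i k, Agen n i j + Agen n j k⁆)}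

/-- The Lie ideal of the free Lie algebra generated by the infinitesimal braid relations. -/
noncomputable def pbIdeal (n : ℕ) : LieIdeal ℤ (PBFree n) :=
  LieSubmodule.lieSpan ℤ (PBFree n) (pbRels n)

/-- The Lie algebra `L(P_n)` of the pure braid group `P_n`. -/
abbrev LP (n : ℕ) : Type := PBFree n ⧸ pbIdeal n

/-- The image `A_{i,j}` in `L(P_n)` of the generator `a_{i,j}` (junk value `0` out of range). -/
noncomputable def A (n i j : ℕ) : LP n :=
  LieSubmodule.Quotient.mk (N := pbIdeal n) (Agen n i j)

/-! ### Auxiliary lemmas -/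

/-- Index shift after deleting strand `k`. -/
def sig (k m : ℕ) : ℕ := if m < k then m else m - 1

lemma mk_rel_zero {n : ℕ} {x : PBFree n} (hx : x ∈ pbRels n) :
    (LieSubmodule.Quotient.mk (N := pbIdeal n) x : LP n) = 0 := by
  rw [LieSubmodule.Quotient.mk_eq_zero']
  exact LieSubmodule.subset_lieSpan hx

lemma relA1 (m i j s t : ℕ) (h1 : 0 < i ∧ i < j ∧ j ≤ m) (h2 : 0 < s ∧ s < t ∧ t ≤ m)
    (hd : ({i, j} : Set ℕ) ∩ {s, t} = ∅) : ⁅A m i j, A m s t⁆ = 0 := by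
  rw [A, A, ← LieSubmodule.Quotient.mk_bracket]
  exact mk_rel_zero (Or.inl ⟨i, j, s, t, h1, h2, hd, rfl⟩)

lemma relA2 (m i j l : ℕ) (h : 0 < i ∧ i < j ∧ j < l ∧ l ≤ m) :
    ⁅A m i j, A m i l + A m j l⁆ = 0 := by
  have : A m i l + A m j l
      = LieSubmodule.Quotient.mk (N := pbIdeal m) (Agen m i l + Agen m j l) :=
    (Submodule.Quotient.mk_add _).symm
  rw [A, this, ← LieSubmodule.Quotient.mk_bracket]
  exact mk_rel_zero (Or.inr (Or.inl ⟨i, j, l, h.1, h.2.1, h.2.2.1, h.2.2.2, rfl⟩))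

lemma relA3 (m i j l : ℕ) (h : 0 < i ∧ i < j ∧ j < l ∧ l ≤ m) :
    ⁅A m i l, A m i j + A m j l⁆ = 0 := by
  have : A m i j + A m j l
      = LieSubmodule.Quotient.mk (N := pbIdeal m) (Agen m i j + Agen m j l) :=
    (Submodule.Quotient.mk_add _).symm
  rw [A, this, ← LieSubmodule.Quotient.mk_bracket]
  exact mk_rel_zero (Or.inr (Or.inr ⟨i, j, l, h.1, h.2.1, h.2.2.1, h.2.2.2, rfl⟩))

/-- The value of the strand-deletion map on generators. -/
noncomputable def dGen (n k : ℕ) : PBGen n → LP (n - 1) := fun p =>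
  if p.1.1 = k ∨ p.1.2 = k then 0 else A (n - 1) (sig k p.1.1) (sig k p.1.2)

/-- The strand-deletion map on the free Lie algebra. -/
noncomputable def Fdel (n k : ℕ) : PBFree n →ₗ⁅ℤ⁆ LP (n - 1) :=
  FreeLieAlgebra.lift ℤ (dGen n k)

lemma Fdel_Agen (n k i j : ℕ) (h : 0 < i ∧ i < j ∧ j ≤ n) :
    Fdel n k (Agen n i j)
      = if i = k ∨ j = k then 0 else A (n - 1) (sig k i) (sig k j) := by
  rw [Agen, dif_pos h, Fdel]
  exact FreeLieAlgebra.lift_of_apply (R := ℤ) (dGen n k) _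

lemma sig_valid {n k : ℕ} (hk1 : 1 ≤ k) (hkn : k ≤ n) {i j : ℕ}
    (hi : 0 < i) (hij : i < j) (hjn : j ≤ n) (hik : i ≠ k) (hjk : j ≠ k) :
    0 < sig k i ∧ sig k i < sig k j ∧ sig k j ≤ n - 1 := by
  simp only [sig]; split_ifs <;> omega

lemma Fdel_rels (n k : ℕ) (hk1 : 1 ≤ k) (hkn : k ≤ n) :
    ∀ x ∈ pbRels n, Fdel n k x = 0 := by
  rintro x (⟨i, j, s, t, h1, h2, hd, rfl⟩ | ⟨i, j, l, hi, hij, hjl, hln, rfl⟩ |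
    ⟨i, j, l, hi, hij, hjl, hln, rfl⟩)
  · rw [LieHom.map_lie, Fdel_Agen n k i j h1, Fdel_Agen n k s t h2]
    by_cases hij0 : i = k ∨ j = k
    · rw [if_pos hij0, zero_lie]
    by_cases hst0 : s = k ∨ t = k
    · rw [if_pos hst0, lie_zero]
    push_neg at hij0 hst0
    rw [if_neg (by tauto), if_neg (by tauto)]
    have his : i ≠ s := fun h => (Set.eq_empty_iff_forall_notMem.mp hd i)
      ⟨by simp, by simp [h]⟩
    have hit : i ≠ t := fun h => (Set.eq_empty_iff_forall_notMem.mp hd i)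
      ⟨by simp, by simp [h]⟩
    have hjs : j ≠ s := fun h => (Set.eq_empty_iff_forall_notMem.mp hd j)
      ⟨by simp, by simp [h]⟩
    have hjt : j ≠ t := fun h => (Set.eq_empty_iff_forall_notMem.mp hd j)
      ⟨by simp, by simp [h]⟩
    apply relA1 _ _ _ _ _
      (sig_valid hk1 hkn h1.1 h1.2.1 h1.2.2 hij0.1 hij0.2)
      (sig_valid hk1 hkn h2.1 h2.2.1 h2.2.2 hst0.1 hst0.2)
    have : sig k i ≠ sig k s ∧ sig k i ≠ sig k t ∧ sig k j ≠ sig k s ∧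
        sig k j ≠ sig k t := by
      simp only [sig]; split_ifs <;> omega
    ext x
    simp only [Set.mem_inter_iff, Set.mem_insert_iff, Set.mem_singleton_iff,
      Set.mem_empty_iff_false, iff_false, not_and]
    rintro (rfl | rfl) (h | h) <;> omega
  · rw [LieHom.map_lie, map_add,
      Fdel_Agen n k i j ⟨hi, hij, le_trans (le_of_lt hjl) hln⟩,
      Fdel_Agen n k i l ⟨hi, lt_trans hij hjl, hln⟩,
      Fdel_Agen n k j l ⟨lt_trans hi hij, hjl, hln⟩]
    by_cases hijk : i = k ∨ j = k
    · rw [if_pos hijk, zero_lie]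
    push_neg at hijk
    by_cases hlk : l = k
    · rw [if_pos (Or.inr hlk), if_pos (Or.inr hlk), add_zero, lie_zero]
    rw [if_neg (by tauto), if_neg (by tauto), if_neg (by tauto)]
    have h1 := sig_valid hk1 hkn hi hij (by omega) hijk.1 hijk.2
    have h2 := sig_valid hk1 hkn (by omega : 0 < j) hjl hln hijk.2 hlk
    exact relA2 _ _ _ _ ⟨h1.1, h1.2.1, h2.2.1, h2.2.2⟩
  · rw [LieHom.map_lie, map_add,
      Fdel_Agen n k i l ⟨hi, lt_trans hij hjl, hln⟩,
      Fdel_Agen n k i j ⟨hi, hij, le_trans (le_of_lt hjl) hln⟩,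
      Fdel_Agen n k j l ⟨lt_trans hi hij, hjl, hln⟩]
    by_cases hilk : i = k ∨ l = k
    · rw [if_pos hilk, zero_lie]
    push_neg at hilk
    by_cases hjk : j = k
    · rw [if_pos (Or.inr hjk), if_pos (Or.inl hjk), add_zero, lie_zero]
    rw [if_neg (by tauto), if_neg (by tauto), if_neg (by tauto)]
    have h1 := sig_valid hk1 hkn hi hij (by omega) hilk.1 hjk
    have h2 := sig_valid hk1 hkn (by omega : 0 < j) hjl hln hjk hilk.2
    exact relA3 _ _ _ _ ⟨h1.1, h1.2.1, h2.2.1, h2.2.2⟩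

/-- The quotient map as a morphism of Lie algebras. -/
noncomputable def pbMk (n : ℕ) : PBFree n →ₗ⁅ℤ⁆ LP n :=
  { (pbIdeal n : Submodule ℤ (PBFree n)).mkQ with
    map_lie' := fun {x y} => rfl }

lemma pbMk_apply (n : ℕ) (x : PBFree n) :
    pbMk n x = LieSubmodule.Quotient.mk (N := pbIdeal n) x := rfl

lemma pbMk_surjective (n : ℕ) : Function.Surjective (pbMk n) :=
  Submodule.Quotient.mk_surjective _

/-- For every `n ≥ 2` and every `k` with `1 ≤ k ≤ n`, there exists a unique
Lie algebra homomorphism `d_k : L(P_n) → L(P_{n-1})` such that `d_k (A_{i,j}) = A_{i,j}` if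
`i < j < k`; `d_k (A_{i,j}) = 0` if `j = k`; `d_k (A_{i,j}) = A_{i,j-1}` if `i < k < j`;
`d_k (A_{i,j}) = 0` if `i = k`; and `d_k (A_{i,j}) = A_{i-1,j-1}` if `k < i < j`. -/
theorem exists_unique_strand_deletion (n : ℕ) (hn : 2 ≤ n) (k : ℕ) (hk1 : 1 ≤ k)
    (hkn : k ≤ n) :
    ∃! f : LP n →ₗ⁅ℤ⁆ LP (n - 1),
      ∀ i j : ℕ, 0 < i → i < j → j ≤ n →
        (j < k → f (A n i j) = A (n - 1) i j) ∧
        (j = k → f (A n i j) = 0) ∧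
        (i < k → k < j → f (A n i j) = A (n - 1) i (j - 1)) ∧
        (i = k → f (A n i j) = 0) ∧
        (k < i → f (A n i j) = A (n - 1) (i - 1) (j - 1)) := by
  -- the ideal lies in the kernel of `Fdel`
  have hker : (pbIdeal n : Submodule ℤ (PBFree n)) ≤
      LinearMap.ker (Fdel n k : PBFree n →ₗ[ℤ] LP (n - 1)) := by
    have : pbIdeal n ≤ (Fdel n k).ker := by
      rw [pbIdeal, LieSubmodule.lieSpan_le]
      intro x hx
      rw [SetLike.mem_coe, LieHom.mem_ker]
      exact Fdel_rels n k hk1 hkn x hx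
    exact this
  -- the induced map on the quotient
  let f0 : LP n →ₗ[ℤ] LP (n - 1) :=
    Submodule.liftQ (pbIdeal n : Submodule ℤ (PBFree n))
      (Fdel n k : PBFree n →ₗ[ℤ] LP (n - 1)) hker
  let f : LP n →ₗ⁅ℤ⁆ LP (n - 1) :=
    { f0 with
      map_lie' := by
        intro x y
        obtain ⟨a, rfl⟩ := pbMk_surjective n x
        obtain ⟨b, rfl⟩ := pbMk_surjective n y
        have h1 : ⁅pbMk n a, pbMk n b⁆ = pbMk n ⁅a, b⁆ := (LieHom.map_lie _ _ _).symm
        show f0 ⁅pbMk n a, pbMk n b⁆ = ⁅f0 (pbMk n a), f0 (pbMk n b)⁆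
        rw [h1]
        have hf0 : ∀ c : PBFree n, f0 (pbMk n c) = Fdel n k c := fun c =>
          Submodule.liftQ_apply _ _ _
        rw [hf0, hf0, hf0, LieHom.map_lie] }
  have hfA : ∀ c : PBFree n, f (pbMk n c) = Fdel n k c := fun c =>
    Submodule.liftQ_apply _ _ _
  have hf : ∀ i j : ℕ, 0 < i ∧ i < j ∧ j ≤ n →
      f (A n i j) = if i = k ∨ j = k then 0 else A (n - 1) (sig k i) (sig k j) := by
    intro i j h
    have : A n i j = pbMk n (Agen n i j) := rfl
    rw [this, hfA, Fdel_Agen n k i j h]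
  refine ⟨f, ?_, ?_⟩
  · intro i j hi hij hjn
    refine ⟨?_, ?_, ?_, ?_, ?_⟩
    · intro hjk
      rw [hf i j ⟨hi, hij, hjn⟩, if_neg (by omega)]
      congr 1 <;> (simp only [sig]; split_ifs <;> omega)
    · intro hjk; rw [hf i j ⟨hi, hij, hjn⟩, if_pos (Or.inr hjk)]
    · intro hik hkj
      rw [hf i j ⟨hi, hij, hjn⟩, if_neg (by omega)]
      congr 1 <;> (simp only [sig]; split_ifs <;> omega)
    · intro hik; rw [hf i j ⟨hi, hij, hjn⟩, if_pos (Or.inl hik)]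
    · intro hki
      rw [hf i j ⟨hi, hij, hjn⟩, if_neg (by omega)]
      congr 1 <;> (simp only [sig]; split_ifs <;> omega)
  · intro g hg
    have key : ∀ i j : ℕ, 0 < i → i < j → j ≤ n → g (A n i j) = f (A n i j) := by
      intro i j hi hij hjn
      obtain ⟨g1, g2, g3, g4, g5⟩ := hg i j hi hij hjn
      have hfi := hf i j ⟨hi, hij, hjn⟩
      rcases lt_trichotomy j k with h | h | h
      · rw [g1 h, hfi, if_neg (by omega)]
        congr 1 <;> (simp only [sig]; split_ifs <;> omega)
      · rw [g2 h, hfi, if_pos (Or.inr h)]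
      · rcases lt_trichotomy i k with h' | h' | h'
        · rw [g3 h' h, hfi, if_neg (by omega)]
          congr 1 <;> (simp only [sig]; split_ifs <;> omega)
        · rw [g4 h', hfi, if_pos (Or.inl h')]
        · rw [g5 h', hfi, if_neg (by omega)]
          congr 1 <;> (simp only [sig]; split_ifs <;> omega)
    have hcomp : g.comp (pbMk n) = f.comp (pbMk n) := by
      apply FreeLieAlgebra.hom_ext
      intro p
      obtain ⟨⟨i, j⟩, hp⟩ := p
      have : pbMk n (FreeLieAlgebra.of ℤ (⟨(i, j), hp⟩ : PBGen n)) = A n i j := by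
        rw [A, Agen, dif_pos hp]; rfl
      show g (pbMk n (FreeLieAlgebra.of ℤ (⟨(i, j), hp⟩ : PBGen n))) =
        f (pbMk n (FreeLieAlgebra.of ℤ (⟨(i, j), hp⟩ : PBGen n)))
      rw [this]
      exact key i j hp.1 hp.2.1 hp.2.2
    ext x
    obtain ⟨a, rfl⟩ := pbMk_surjective n x
    exact LieHom.congr_fun hcomp a
end

section
/- Let X and Y be disjoint nonempty sets, let Z = X ∪ Y, and let π : L[Z] → L[Y] be the Lie algebra homomorphism over ℤ of free Lie algebras with π(x) = 0 for x ∈ X and π(y) = y for y ∈ Y. Then the kernel of π is a free Lie algebra freely generated by the elements x and [⋯[[x, y_1], y_2], …, y_t] for x ∈ X, y_1, …, y_t ∈ Y, t ≥ 1. More precisely, the canonical Lie algebra homomorphism from the free Lie algebra over ℤ on the index set of pairs (x, (y_1, …, y_t)) with x ∈ X, t ≥ 0, y_i ∈ Y, sending (x, (y_1, …, y_t)) to the left-normed bracket [⋯[[x, y_1], y_2], …, y_t] (equal to x when t = 0), is injective with image equal to Ker(π). -/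
noncomputable section

section Induction

open FreeLieAlgebra

/-- Induction principle for free Lie algebras. -/
theorem freeLie_induction {R : Type*} [CommRing R] {X : Type*}
    {p : FreeLieAlgebra R X → Prop}
    (h_of : ∀ x, p (of R x)) (h_zero : p 0)
    (h_add : ∀ a b, p a → p b → p (a + b))
    (h_smul : ∀ (t : R) a, p a → p (t • a))
    (h_lie : ∀ a b, p a → p b → p ⁅a, b⁆) (a : FreeLieAlgebra R X) : p a := by
  let P : LieSubalgebra R (FreeLieAlgebra R X) :=
    { carrier := {a | p a}
      add_mem' := fun ha hb => h_add _ _ ha hb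
      zero_mem' := h_zero
      smul_mem' := fun t a ha => h_smul t a ha
      lie_mem' := fun ha hb => h_lie _ _ ha hb }
  let j : FreeLieAlgebra R X →ₗ⁅R⁆ P := lift R (fun x => ⟨of R x, h_of x⟩)
  have hj : P.incl.comp j = LieHom.id := by
    apply FreeLieAlgebra.hom_ext
    intro x
    simp [j, lift_of_apply]
  have : ∀ a : FreeLieAlgebra R X, a ∈ P := by
    intro a
    have := LieHom.congr_fun hj a
    simp only [LieHom.comp_apply, LieHom.id_apply] at this
    rw [← this]
    exact (j a).2
  exact this a

end Induction

section SD

variable (R : Type*) [CommRing R]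
variable (A B : Type*) [LieRing A] [LieAlgebra R A] [LieRing B] [LieAlgebra R B]
variable (ρ : B →ₗ⁅R⁆ LieDerivation R A A)

/-- Semidirect product of Lie algebras. -/
def SD (_ρ : B →ₗ⁅R⁆ LieDerivation R A A) := A × B

namespace SD

instance : AddCommGroup (SD R A B ρ) := Prod.instAddCommGroup
instance : Module R (SD R A B ρ) := Prod.instModule

instance : Bracket (SD R A B ρ) (SD R A B ρ) :=
  ⟨fun p q => (⁅p.1, q.1⁆ + ρ p.2 q.1 - ρ q.2 p.1, ⁅p.2, q.2⁆)⟩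

lemma bracket_def (p q : SD R A B ρ) :
    ⁅p, q⁆ = (⁅p.1, q.1⁆ + ρ p.2 q.1 - ρ q.2 p.1, ⁅p.2, q.2⁆) := rfl

lemma ext_iff (p q : SD R A B ρ) : p = q ↔ p.1 = q.1 ∧ p.2 = q.2 := Prod.ext_iff

@[simp] lemma add_fst (p q : SD R A B ρ) : (p + q).1 = p.1 + q.1 := rfl
@[simp] lemma add_snd (p q : SD R A B ρ) : (p + q).2 = p.2 + q.2 := rfl
@[simp] lemma smul_fst (t : R) (p : SD R A B ρ) : (t • p).1 = t • p.1 := rfl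
@[simp] lemma smul_snd (t : R) (p : SD R A B ρ) : (t • p).2 = t • p.2 := rfl
@[simp] lemma zero_fst : (0 : SD R A B ρ).1 = 0 := rfl
@[simp] lemma zero_snd : (0 : SD R A B ρ).2 = 0 := rfl

instance : LieRing (SD R A B ρ) where
  add_lie p q r := by
    obtain ⟨a₁, b₁⟩ := p; obtain ⟨a₂, b₂⟩ := q; obtain ⟨a₃, b₃⟩ := r
    show ((⁅a₁ + a₂, a₃⁆ + ρ (b₁ + b₂) a₃ - ρ b₃ (a₁ + a₂), ⁅b₁ + b₂, b₃⁆) : A × B)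
      = (⁅a₁, a₃⁆ + ρ b₁ a₃ - ρ b₃ a₁ + (⁅a₂, a₃⁆ + ρ b₂ a₃ - ρ b₃ a₂), ⁅b₁, b₃⁆ + ⁅b₂, b₃⁆)
    refine Prod.ext ?_ (add_lie _ _ _)
    simp only [add_lie, map_add, LieDerivation.add_apply]
    abel
  lie_add p q r := by
    obtain ⟨a₁, b₁⟩ := p; obtain ⟨a₂, b₂⟩ := q; obtain ⟨a₃, b₃⟩ := r
    show ((⁅a₁, a₂ + a₃⁆ + ρ b₁ (a₂ + a₃) - ρ (b₂ + b₃) a₁, ⁅b₁, b₂ + b₃⁆) : A × B)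
      = (⁅a₁, a₂⁆ + ρ b₁ a₂ - ρ b₂ a₁ + (⁅a₁, a₃⁆ + ρ b₁ a₃ - ρ b₃ a₁), ⁅b₁, b₂⁆ + ⁅b₁, b₃⁆)
    refine Prod.ext ?_ (lie_add _ _ _)
    simp only [lie_add, map_add, LieDerivation.add_apply]
    abel
  lie_self p := by
    obtain ⟨a, b⟩ := p
    show ((⁅a, a⁆ + ρ b a - ρ b a, ⁅b, b⁆) : A × B) = (0, 0)
    simp
  leibniz_lie p q r := by
    obtain ⟨a₁, b₁⟩ := p; obtain ⟨a₂, b₂⟩ := q; obtain ⟨a₃, b₃⟩ := r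
    show ((⁅a₁, ⁅a₂, a₃⁆ + ρ b₂ a₃ - ρ b₃ a₂⁆ + ρ b₁ (⁅a₂, a₃⁆ + ρ b₂ a₃ - ρ b₃ a₂)
        - ρ ⁅b₂, b₃⁆ a₁, ⁅b₁, ⁅b₂, b₃⁆⁆) : A × B)
      = (⁅⁅a₁, a₂⁆ + ρ b₁ a₂ - ρ b₂ a₁, a₃⁆ + ρ ⁅b₁, b₂⁆ a₃ - ρ b₃ (⁅a₁, a₂⁆ + ρ b₁ a₂ - ρ b₂ a₁)
        + (⁅a₂, ⁅a₁, a₃⁆ + ρ b₁ a₃ - ρ b₃ a₁⁆ + ρ b₂ (⁅a₁, a₃⁆ + ρ b₁ a₃ - ρ b₃ a₁)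
        - ρ ⁅b₁, b₃⁆ a₂), ⁅⁅b₁, b₂⁆, b₃⁆ + ⁅b₂, ⁅b₁, b₃⁆⁆)
    refine Prod.ext ?_ (leibniz_lie _ _ _)
    simp only
    simp only [lie_add, lie_sub, add_lie, sub_lie, map_add, map_sub, LieHom.map_lie,
      LieDerivation.lie_apply, LieDerivation.apply_lie_eq_sub]
    rw [leibniz_lie a₁ a₂ a₃, ← lie_skew ⁅a₁, a₂⁆ a₃, ← lie_skew ((ρ b₁) a₂) a₃,
      ← lie_skew ((ρ b₂) a₁) a₃]
    abel

instance : LieAlgebra R (SD R A B ρ) where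
  lie_smul t p q := by
    obtain ⟨a₁, b₁⟩ := p; obtain ⟨a₂, b₂⟩ := q
    show ((⁅a₁, t • a₂⁆ + ρ b₁ (t • a₂) - ρ (t • b₂) a₁, ⁅b₁, t • b₂⁆) : A × B)
      = (t • (⁅a₁, a₂⁆ + ρ b₁ a₂ - ρ b₂ a₁), t • ⁅b₁, b₂⁆)
    simp [lie_smul, map_smul, LieDerivation.smul_apply, smul_add, smul_sub]

/-- Inclusion of the ideal. -/
def inl : A →ₗ⁅R⁆ SD R A B ρ where
  toFun a := (a, 0)
  map_add' a b := Prod.ext rfl (add_zero (0 : B)).symm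
  map_smul' t a := Prod.ext rfl (smul_zero t).symm
  map_lie' {a b} := Prod.ext (by show ⁅a, b⁆ = ⁅a, b⁆ + ρ 0 b - ρ 0 a; simp)
    (by show (0 : B) = ⁅(0 : B), 0⁆; simp)

/-- Projection onto the quotient. -/
def snd : SD R A B ρ →ₗ⁅R⁆ B where
  toFun p := p.2
  map_add' a b := rfl
  map_smul' t a := rfl
  map_lie' {a b} := rfl

@[simp] lemma inl_apply (a : A) : inl R A B ρ a = (a, 0) := rfl
@[simp] lemma snd_apply (p : SD R A B ρ) : snd R A B ρ p = p.2 := rfl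

end SD
end SD

section Triv

/-- Type synonym for a module equipped with the trivial (abelian) Lie algebra structure. -/
def Triv (M : Type*) := M

namespace Triv

variable (R M : Type*) [CommRing R] [AddCommGroup M] [Module R M]

instance : AddCommGroup (Triv M) := ‹AddCommGroup M›
instance : Module R (Triv M) := ‹Module R M›
instance : Bracket (Triv M) (Triv M) := ⟨fun _ _ => (0 : M)⟩

@[simp] lemma bracket_def (a b : Triv M) : ⁅a, b⁆ = (0 : M) := rfl

instance : LieRing (Triv M) :=
  { (inferInstance : AddCommGroup (Triv M)) with
    add_lie := by intros; exact (add_zero (0 : M)).symm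
    lie_add := by intros; exact (add_zero (0 : M)).symm
    lie_self := by intros; rfl
    leibniz_lie := by intros; exact (add_zero (0 : M)).symm }

instance : LieAlgebra R (Triv M) where
  lie_smul := by intros; exact (smul_zero _).symm

end Triv

end Triv

section DerivOfValues

open FreeLieAlgebra

variable (R S : Type*) [CommRing R]

/-- The adjoint action of a Lie algebra `K` on itself, viewed as a map into derivations of the
abelianisation `Triv K`. -/
def adTriv (K : Type*) [LieRing K] [LieAlgebra R K] :
    K →ₗ⁅R⁆ LieDerivation R (Triv K) (Triv K) where
  toFun k :=
    { toLinearMap := LieAlgebra.ad R K k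
      leibniz' := fun a b => by
        show (⁅k, (0 : K)⁆ : K) = (0 : K) - (0 : K)
        simp }
  map_add' k k' := by ext a; exact add_lie k k' (show K from a)
  map_smul' t k := by ext a; exact smul_lie t k (show K from a)
  map_lie' {k k'} := by
    ext a
    rw [LieDerivation.commutator_apply]
    exact lie_lie k k' (show K from a)

variable (v : S → FreeLieAlgebra R S)

def derivAux : FreeLieAlgebra R S →ₗ⁅R⁆
    SD R (Triv (FreeLieAlgebra R S)) (FreeLieAlgebra R S) (adTriv R (FreeLieAlgebra R S)) :=
  lift R fun s => ((v s : Triv (FreeLieAlgebra R S)), of R s)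

lemma derivAux_snd (a : FreeLieAlgebra R S) : (derivAux R S v a).2 = a := by
  have h : (SD.snd R (Triv (FreeLieAlgebra R S)) (FreeLieAlgebra R S)
      (adTriv R (FreeLieAlgebra R S))).comp (derivAux R S v) = LieHom.id := by
    apply hom_ext
    intro s
    show (derivAux R S v (of R s)).2 = of R s
    exact congrArg Prod.snd (lift_of_apply (L := SD R (Triv (FreeLieAlgebra R S)) (FreeLieAlgebra R S) (adTriv R (FreeLieAlgebra R S))) _ s)
  have := LieHom.congr_fun h a
  simpa using this

/-- The derivation of a free Lie algebra determined by its values on the generators. -/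
def derivationOfValues : LieDerivation R (FreeLieAlgebra R S) (FreeLieAlgebra R S) where
  toFun a := (show FreeLieAlgebra R S from (derivAux R S v a).1)
  map_add' a b := congrArg Prod.fst ((derivAux R S v).map_add a b)
  map_smul' t a := congrArg Prod.fst ((derivAux R S v).map_smul t a)
  leibniz' a b := by
    show (derivAux R S v ⁅a, b⁆).1
        = ⁅a, (show FreeLieAlgebra R S from (derivAux R S v b).1)⁆
          - ⁅b, (show FreeLieAlgebra R S from (derivAux R S v a).1)⁆
    rw [LieHom.map_lie]
    show (0 : FreeLieAlgebra R S)
          + ⁅(derivAux R S v a).2, (show FreeLieAlgebra R S from (derivAux R S v b).1)⁆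
          - ⁅(derivAux R S v b).2, (show FreeLieAlgebra R S from (derivAux R S v a).1)⁆ = _
    rw [derivAux_snd, derivAux_snd, zero_add]

@[simp] lemma derivationOfValues_apply_of (s : S) :
    derivationOfValues R S v (of R s) = v s := by
  show (derivAux R S v (of R s)).1 = v s
  exact congrArg Prod.fst (lift_of_apply (L := SD R (Triv (FreeLieAlgebra R S)) (FreeLieAlgebra R S) (adTriv R (FreeLieAlgebra R S))) _ s)

end DerivOfValues

/-- The left-normed bracket `[⋯[[x, y₁], y₂], …, y_t]` in a Lie ring,
given as a fold over the list `[y₁, …, y_t]` (equal to `x` when the list is empty). -/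
def leftNormedBracket {L : Type*} [LieRing L] (x : L) (l : List L) : L :=
  l.foldl (fun a b => ⁅a, b⁆) x

section LNB

variable {L L' : Type*} [LieRing L] [LieAlgebra ℤ L] [LieRing L'] [LieAlgebra ℤ L']

@[simp] lemma leftNormedBracket_nil (x : L) : leftNormedBracket x [] = x := rfl

@[simp] lemma leftNormedBracket_cons (x z : L) (l : List L) :
    leftNormedBracket x (z :: l) = leftNormedBracket ⁅x, z⁆ l := rfl

lemma leftNormedBracket_concat (x z : L) (l : List L) :
    leftNormedBracket x (l ++ [z]) = ⁅leftNormedBracket x l, z⁆ := by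
  simp [leftNormedBracket, List.foldl_append]

lemma leftNormedBracket_zero (l : List L) : leftNormedBracket (0 : L) l = 0 := by
  induction l with
  | nil => rfl
  | cons z l ih => simpa using ih

lemma map_leftNormedBracket (f : L →ₗ⁅ℤ⁆ L') (x : L) (l : List L) :
    f (leftNormedBracket x l) = leftNormedBracket (f x) (l.map f) := by
  induction l generalizing x with
  | nil => rfl
  | cons z l ih => simpa using ih ⁅x, z⁆

end LNB

namespace KerFree

open FreeLieAlgebra

variable (X Y : Type*)

/-- Generator values for the candidate free generating set of the kernel. -/
abbrev g : X × List Y → FreeLieAlgebra ℤ (X ⊕ Y) := fun p =>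
  leftNormedBracket (FreeLieAlgebra.of ℤ (Sum.inl p.1 : X ⊕ Y))
    (p.2.map (fun y => FreeLieAlgebra.of ℤ (Sum.inr y : X ⊕ Y)))

/-- The candidate isomorphism onto the kernel. -/
abbrev φm : FreeLieAlgebra ℤ (X × List Y) →ₗ⁅ℤ⁆ FreeLieAlgebra ℤ (X ⊕ Y) := lift ℤ (g X Y)

/-- The projection onto `L[Y]`. -/
abbrev πm : FreeLieAlgebra ℤ (X ⊕ Y) →ₗ⁅ℤ⁆ FreeLieAlgebra ℤ Y :=
  lift ℤ (Sum.elim (fun _ : X => (0 : FreeLieAlgebra ℤ Y)) (fun y : Y => FreeLieAlgebra.of ℤ y))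

/-- The canonical section of the projection. -/
abbrev σm : FreeLieAlgebra ℤ Y →ₗ⁅ℤ⁆ FreeLieAlgebra ℤ (X ⊕ Y) :=
  lift ℤ (fun y : Y => FreeLieAlgebra.of ℤ (Sum.inr y : X ⊕ Y))

/-- The derivation of the free Lie algebra `L[X × List Y]` induced by `y : Y`. -/
abbrev δm (y : Y) :
    LieDerivation ℤ (FreeLieAlgebra ℤ (X × List Y)) (FreeLieAlgebra ℤ (X × List Y)) :=
  derivationOfValues ℤ (X × List Y) (fun p => -(of ℤ (p.1, p.2 ++ [y])))

/-- The action of `L[Y]` on `L[X × List Y]` by derivations. -/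
abbrev ρm : FreeLieAlgebra ℤ Y →ₗ⁅ℤ⁆
    LieDerivation ℤ (FreeLieAlgebra ℤ (X × List Y)) (FreeLieAlgebra ℤ (X × List Y)) :=
  lift ℤ (δm X Y)

/-- The ambient semidirect product. -/
abbrev Smd := SD ℤ (FreeLieAlgebra ℤ (X × List Y)) (FreeLieAlgebra ℤ Y) (ρm X Y)

/-- Explicit pairs in the semidirect product. -/
def pr (k : FreeLieAlgebra ℤ (X × List Y)) (f : FreeLieAlgebra ℤ Y) : Smd X Y := (k, f)

@[simp] lemma pr_fst (k f) : (pr X Y k f).1 = k := rfl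
@[simp] lemma pr_snd (k f) : (pr X Y k f).2 = f := rfl
@[simp] lemma pr_zero : pr X Y 0 0 = 0 := rfl

/-- The comparison homomorphism into the semidirect product. -/
abbrev αm : FreeLieAlgebra ℤ (X ⊕ Y) →ₗ⁅ℤ⁆ Smd X Y :=
  lift ℤ (Sum.elim (fun x : X => pr X Y (of ℤ (x, ([] : List Y))) 0)
    (fun y : Y => pr X Y 0 (of ℤ y)))

lemma bracket_inl_y (k : FreeLieAlgebra ℤ (X × List Y)) (y : Y) :
    ⁅pr X Y k 0, pr X Y 0 (of ℤ y)⁆ = pr X Y (-(δm X Y y k)) 0 := by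
  rw [SD.bracket_def, pr, pr, pr]
  refine (SD.ext_iff _ _ _ _ _ _).mpr ?_
  constructor
  · show ⁅k, (0 : FreeLieAlgebra ℤ (X × List Y))⁆ + (ρm X Y) 0 0 - (ρm X Y) (of ℤ y) k
        = -(δm X Y y k)
    erw [lift_of_apply]
    simp
  · show ⁅(0 : FreeLieAlgebra ℤ Y), of ℤ y⁆ = 0
    simp

lemma alpha_g (l : List Y) (x : X) (acc : List Y) :
    leftNormedBracket (pr X Y (of ℤ (x, acc)) 0) (l.map (fun y => pr X Y 0 (of ℤ y)))
      = pr X Y (of ℤ (x, acc ++ l)) 0 := by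
  induction l generalizing acc with
  | nil => simp
  | cons y l ih =>
    erw [List.map_cons, leftNormedBracket_cons, bracket_inl_y, derivationOfValues_apply_of,
      neg_neg, ih (acc ++ [y]), List.append_assoc, List.singleton_append]

lemma alpha_phi (a : FreeLieAlgebra ℤ (X × List Y)) :
    αm X Y (φm X Y a) = pr X Y a 0 := by
  have h : (αm X Y).comp (φm X Y)
      = SD.inl ℤ (FreeLieAlgebra ℤ (X × List Y)) (FreeLieAlgebra ℤ Y) (ρm X Y) := by
    apply hom_ext
    intro p
    erw [LieHom.comp_apply, lift_of_apply, SD.inl_apply]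
    show αm X Y (g X Y p) = _
    rw [show g X Y p = leftNormedBracket (of ℤ (Sum.inl p.1 : X ⊕ Y))
        (p.2.map (fun y => of ℤ (Sum.inr y : X ⊕ Y))) from rfl]
    erw [map_leftNormedBracket, lift_of_apply, List.map_map]
    have h2 : ((αm X Y : FreeLieAlgebra ℤ (X ⊕ Y) → Smd X Y) ∘ fun y => of ℤ (Sum.inr y : X ⊕ Y))
        = fun y => pr X Y 0 (of ℤ y) := by
      funext y
      simp only [Function.comp_apply]
      exact lift_of_apply _ _
    rw [h2]
    simp only [Sum.elim_inl]
    rw [alpha_g]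
    rfl
  have := LieHom.congr_fun h a
  exact this

lemma phi_injective : Function.Injective (φm X Y) := by
  intro a b hab
  have h := congrArg (αm X Y) hab
  rw [alpha_phi, alpha_phi] at h
  exact congrArg Prod.fst h

lemma pi_phi (a : FreeLieAlgebra ℤ (X × List Y)) : πm X Y (φm X Y a) = 0 := by
  induction a using freeLie_induction with
  | h_of p =>
    erw [lift_of_apply]
    show πm X Y (leftNormedBracket (of ℤ (Sum.inl p.1 : X ⊕ Y))
      (p.2.map (fun y => of ℤ (Sum.inr y : X ⊕ Y)))) = 0
    erw [map_leftNormedBracket, lift_of_apply]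
    show leftNormedBracket (0 : FreeLieAlgebra ℤ Y) _ = 0
    exact leftNormedBracket_zero _
  | h_zero => simp
  | h_add a b ha hb => rw [map_add, map_add, ha, hb, add_zero]
  | h_smul t a ha => rw [map_smul, map_smul, ha, smul_zero]
  | h_lie a b ha hb => rw [LieHom.map_lie, LieHom.map_lie, ha, zero_lie]

lemma keyA (y : Y) (k : FreeLieAlgebra ℤ (X × List Y)) :
    φm X Y (δm X Y y k) = ⁅of ℤ (Sum.inr y : X ⊕ Y), φm X Y k⁆ := by
  induction k using freeLie_induction with
  | h_of p =>
    erw [derivationOfValues_apply_of, map_neg, lift_of_apply, lift_of_apply]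
    show -(g X Y (p.1, p.2 ++ [y])) = ⁅of ℤ (Sum.inr y : X ⊕ Y), g X Y p⁆
    rw [show g X Y (p.1, p.2 ++ [y]) = leftNormedBracket (of ℤ (Sum.inl p.1 : X ⊕ Y))
        ((p.2 ++ [y]).map (fun y => of ℤ (Sum.inr y : X ⊕ Y))) from rfl]
    rw [List.map_append, List.map_singleton, leftNormedBracket_concat, lie_skew]
  | h_zero => simp
  | h_add a b ha hb =>
    rw [map_add, map_add, map_add, ha, hb, lie_add]
  | h_smul t a ha =>
    rw [map_smul, map_smul, map_smul, ha, lie_smul]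
  | h_lie a b ha hb =>
    rw [LieDerivation.apply_lie_eq_add, map_add, LieHom.map_lie, LieHom.map_lie,
      LieHom.map_lie, ha, hb, leibniz_lie (of ℤ (Sum.inr y : X ⊕ Y)) (φm X Y a) (φm X Y b)]
    abel

lemma keyB (f : FreeLieAlgebra ℤ Y) :
    ∀ k, φm X Y (ρm X Y f k) = ⁅σm X Y f, φm X Y k⁆ := by
  induction f using freeLie_induction with
  | h_of y =>
    intro k
    erw [lift_of_apply, lift_of_apply]
    exact keyA X Y y k
  | h_zero =>
    intro k
    simp
  | h_add a b ha hb =>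
    intro k
    rw [map_add, map_add, LieDerivation.add_apply, map_add, ha, hb, add_lie]
  | h_smul t a ha =>
    intro k
    rw [map_smul, map_smul, LieDerivation.smul_apply, map_smul, ha, smul_lie]
  | h_lie a b ha hb =>
    intro k
    rw [LieHom.map_lie, LieHom.map_lie, LieDerivation.lie_apply, map_sub,
      ha ((ρm X Y b) k), hb k, hb ((ρm X Y a) k), ha k, lie_lie]

/-- The retraction from the semidirect product back to `L[X ⊕ Y]`. -/
def γm : Smd X Y →ₗ⁅ℤ⁆ FreeLieAlgebra ℤ (X ⊕ Y) where
  toFun s := φm X Y s.1 + σm X Y s.2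
  map_add' p q := by
    show φm X Y (p + q).1 + σm X Y (p + q).2 = (φm X Y p.1 + σm X Y p.2) + (φm X Y q.1 + σm X Y q.2)
    rw [SD.add_fst, SD.add_snd, map_add, map_add]
    abel
  map_smul' t p := by
    show φm X Y (t • p).1 + σm X Y (t • p).2 = t • (φm X Y p.1 + σm X Y p.2)
    erw [SD.smul_fst, SD.smul_snd, map_smul, map_smul, smul_add]
  map_lie' {p q} := by
    rw [SD.bracket_def]
    show φm X Y (⁅p.1, q.1⁆ + ρm X Y p.2 q.1 - ρm X Y q.2 p.1) + σm X Y ⁅p.2, q.2⁆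
        = ⁅φm X Y p.1 + σm X Y p.2, φm X Y q.1 + σm X Y q.2⁆
    rw [map_sub, map_add, LieHom.map_lie, LieHom.map_lie, keyB, keyB]
    simp only [lie_add, add_lie]
    rw [← lie_skew (σm X Y q.2) (φm X Y p.1)]
    abel

@[simp] lemma γm_apply (s : Smd X Y) : γm X Y s = φm X Y s.1 + σm X Y s.2 := rfl

lemma gamma_alpha (a : FreeLieAlgebra ℤ (X ⊕ Y)) : γm X Y (αm X Y a) = a := by
  have h : (γm X Y).comp (αm X Y) = LieHom.id := by
    apply hom_ext
    intro s
    erw [LieHom.comp_apply, lift_of_apply, LieHom.id_apply (R := ℤ)]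
    cases s with
    | inl x =>
      show φm X Y (of ℤ (x, ([] : List Y))) + σm X Y 0 = of ℤ (Sum.inl x : X ⊕ Y)
      erw [map_zero, add_zero, lift_of_apply]
      rfl
    | inr y =>
      show φm X Y 0 + σm X Y (of ℤ y) = of ℤ (Sum.inr y : X ⊕ Y)
      erw [map_zero, zero_add, lift_of_apply]
  have := LieHom.congr_fun h a
  simpa using this

lemma snd_alpha (a : FreeLieAlgebra ℤ (X ⊕ Y)) : (αm X Y a).2 = πm X Y a := by
  have h : (SD.snd ℤ (FreeLieAlgebra ℤ (X × List Y)) (FreeLieAlgebra ℤ Y) (ρm X Y)).comp (αm X Y)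
      = πm X Y := by
    apply hom_ext
    intro s
    erw [LieHom.comp_apply, lift_of_apply, lift_of_apply]
    cases s <;> rfl
  exact LieHom.congr_fun h a

end KerFree

/-- **Statement 3.** Let `X` and `Y` be disjoint nonempty sets (modelled by the sum
type `X ⊕ Y`), and let `π : L[X ⊕ Y] → L[Y]` be the Lie algebra homomorphism over `ℤ`
with `π x = 0` for `x ∈ X` and `π y = y` for `y ∈ Y`.  Then `Ker π` is a free Lie
algebra freely generated by the elements `x` and `[⋯[[x, y₁], y₂], …, y_t]` for `x ∈ X`,
`y₁, …, y_t ∈ Y`, `t ≥ 1`: the canonical Lie algebra homomorphism from the free Lie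
algebra over `ℤ` on the index set of pairs `(x, (y₁, …, y_t))` (with `t ≥ 0`) sending
`(x, (y₁, …, y_t))` to the left-normed bracket `[⋯[[x, y₁], y₂], …, y_t]` is injective
with image equal to `Ker π`. -/
theorem ker_free_lie_projection_free (X Y : Type*) [Nonempty X] [Nonempty Y] :
    Function.Injective
      (FreeLieAlgebra.lift ℤ (fun p : X × List Y =>
        leftNormedBracket (FreeLieAlgebra.of ℤ (Sum.inl p.1 : X ⊕ Y))
          (p.2.map (fun y => FreeLieAlgebra.of ℤ (Sum.inr y : X ⊕ Y))))) ∧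
    Set.range
      (FreeLieAlgebra.lift ℤ (fun p : X × List Y =>
        leftNormedBracket (FreeLieAlgebra.of ℤ (Sum.inl p.1 : X ⊕ Y))
          (p.2.map (fun y => FreeLieAlgebra.of ℤ (Sum.inr y : X ⊕ Y))))) =
      {a : FreeLieAlgebra ℤ (X ⊕ Y) |
        FreeLieAlgebra.lift ℤ
          (Sum.elim (fun _ : X => (0 : FreeLieAlgebra ℤ Y))
            (fun y : Y => FreeLieAlgebra.of ℤ y)) a = 0} := by
  constructor
  · exact KerFree.phi_injective X Y
  · ext a
    simp only [Set.mem_range, Set.mem_setOf_eq]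
    constructor
    · rintro ⟨b, rfl⟩
      exact KerFree.pi_phi X Y b
    · intro ha
      refine ⟨(KerFree.αm X Y a).1, ?_⟩
      have h1 := KerFree.gamma_alpha X Y a
      have h2 : (KerFree.αm X Y a).2 = 0 := (KerFree.snd_alpha X Y a).trans ha
      rw [KerFree.γm_apply, h2, map_zero, add_zero] at h1
      exact h1

end
end

section
/- Let L be a Lie algebra over a commutative ring and let I_1, …, I_n be Lie ideals of L. Let a_j ∈ I_j for 1 ≤ j ≤ n. Then for every permutation σ of {1, …, n} and every bracket arrangement β^n of weight n, the element β^n(a_{σ(1)}, …, a_{σ(n)}) lies in the symmetric bracket sum [[I_1, I_2], …, I_n]_S. -/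
/-- Bracket arrangements of weight `t`: `β¹(a₁) = a₁` and every bracket arrangement of
weight `t ≥ 2` has the form `βᵗ(a₁, …, a_t) = [βᵖ(a₁, …, a_p), β^{t-p}(a_{p+1}, …, a_t)]`. -/
inductive BracketArr : ℕ → Type
  | leaf : BracketArr 1
  | node {p q : ℕ} : BracketArr p → BracketArr q → BracketArr (p + q)

/-- Evaluation of a bracket arrangement of weight `t` on a `t`-tuple of elements
of a Lie ring. -/
def BracketArr.eval {L : Type*} [LieRing L] : ∀ {t : ℕ}, BracketArr t → (Fin t → L) → L
  | _, .leaf, a => a 0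
  | _, .node u v, a =>
      ⁅u.eval (fun i => a (Fin.castAdd _ i)), v.eval (fun i => a (Fin.natAdd _ i))⁆

/-- The left-normed bracket of a list of Lie ideals,
`[[⋯[[I₁, I₂], I₃], …], I_m]` (with junk value `⊥` for the empty list). -/
def lnbIdeal {R : Type*} [CommRing R] {L : Type*} [LieRing L] [LieAlgebra R L] :
    List (LieIdeal R L) → LieIdeal R L
  | [] => ⊥
  | I :: Is => Is.foldl (fun acc J => ⁅acc, J⁆) I

/-- The symmetric bracket sum `[[I₁, I₂], …, I_n]_S = Σ_{σ ∈ Σ_n}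
[[I_{σ(1)}, I_{σ(2)}], …, I_{σ(n)}]` of a family of Lie ideals. -/
def symBracketSum {R : Type*} [CommRing R] {L : Type*} [LieRing L] [LieAlgebra R L]
    {n : ℕ} (I : Fin n → LieIdeal R L) : LieIdeal R L :=
  ⨆ σ : Equiv.Perm (Fin n), lnbIdeal (List.ofFn (fun s => I (σ s)))

/-- The fat bracket sum `[[I₁, I₂, …, I_n]]`: the Lie ideal generated by all elements
`βᵗ(a_{i₁}, …, a_{i_t})`, where `t ≥ n`, `βᵗ` is a bracket arrangement of weight `t`,
every integer in `{1, …, n}` occurs among the indices `i₁, …, i_t`, and `a_{i_s} ∈ I_{i_s}`. -/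
def fatBracketSum {R : Type*} [CommRing R] {L : Type*} [LieRing L] [LieAlgebra R L]
    {n : ℕ} (I : Fin n → LieIdeal R L) : LieIdeal R L :=
  LieSubmodule.lieSpan R L
    {x : L | ∃ t : ℕ, n ≤ t ∧ ∃ β : BracketArr t, ∃ idx : Fin t → Fin n,
      Function.Surjective idx ∧ ∃ a : Fin t → L,
        (∀ s : Fin t, a s ∈ I (idx s)) ∧ x = β.eval a}

/-! ### Auxiliary list/permutation lemmas -/

theorem ofFnCastAux {α : Type*} {m n : ℕ} (h : m = n) (f : Fin n → α) :
    List.ofFn f = List.ofFn (fun i : Fin m => f (Fin.cast h i)) := by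
  subst h; rfl

theorem permExistsGetPerm {α : Type*} :
    ∀ {l₁ l₂ : List α}, l₁.Perm l₂ →
      ∃ σ : Equiv.Perm (Fin l₁.length), l₂ = List.ofFn (fun i => l₁.get (σ i)) := by
  intro l₁ l₂ h
  induction h with
  | nil => exact ⟨1, rfl⟩
  | cons x h ih =>
      obtain ⟨σ, hσ⟩ := ih
      refine ⟨Equiv.Perm.decomposeFin.symm (0, σ), ?_⟩
      rw [List.ofFn_succ, hσ]
      simp [Equiv.Perm.decomposeFin_symm_apply_zero,
        Equiv.Perm.decomposeFin_symm_apply_succ]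
  | swap x y t =>
      show ∃ σ : Equiv.Perm (Fin (t.length + 1 + 1)),
        x :: y :: t = List.ofFn (fun i => (y :: x :: t).get (σ i))
      refine ⟨Equiv.swap 0 1, ?_⟩
      have h2 : ∀ i : Fin t.length, Equiv.swap (0 : Fin (t.length + 1 + 1)) 1 i.succ.succ
          = i.succ.succ := by
        intro i
        refine Equiv.swap_apply_of_ne_of_ne (Fin.succ_ne_zero _) ?_
        rw [← Fin.succ_zero_eq_one]
        exact fun hc => Fin.succ_ne_zero i (Fin.succ_injective _ hc)
      rw [List.ofFn_succ, List.ofFn_succ]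
      simp only [Fin.succ_zero_eq_one, Equiv.swap_apply_left, Equiv.swap_apply_right, h2]
      simp [List.ofFn_get]
  | trans h₁ h₂ ih₁ ih₂ =>
      obtain ⟨σ₁, hσ₁⟩ := ih₁
      obtain ⟨σ₂, hσ₂⟩ := ih₂
      have hlen : _ = _ := h₁.length_eq
      refine ⟨((finCongr hlen).trans σ₂).trans ((finCongr hlen.symm).trans σ₁), ?_⟩
      rw [hσ₂, ofFnCastAux hlen (fun i => _)]
      congr 1
      funext i
      rw [List.get_of_eq hσ₁, List.get_ofFn]
      rfl

theorem permOfFnExists {α : Type*} {n : ℕ} (f : Fin n → α) {l : List α}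
    (h : (List.ofFn f).Perm l) :
    ∃ σ : Equiv.Perm (Fin n), l = List.ofFn (fun i => f (σ i)) := by
  obtain ⟨σ₀, hσ₀⟩ := permExistsGetPerm h
  have hlen : n = (List.ofFn f).length := (List.length_ofFn (f := f)).symm
  refine ⟨((finCongr hlen).trans σ₀).trans (finCongr hlen.symm), ?_⟩
  rw [hσ₀, ofFnCastAux hlen (fun i => _)]
  congr 1
  funext i
  rw [List.get_ofFn]
  rfl

/-! ### Lie ideal lemmas -/

section Lie

variable {R : Type*} [CommRing R] {L : Type*} [LieRing L] [LieAlgebra R L]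

theorem lnbIdealAppendSingleton {A : List (LieIdeal R L)} (hA : A ≠ []) (J : LieIdeal R L) :
    lnbIdeal (A ++ [J]) = ⁅lnbIdeal A, J⁆ := by
  cases A with
  | nil => exact absurd rfl hA
  | cons I Is => simp [lnbIdeal, List.foldl_append]

theorem iSupLieLe {ι : Type*} (A : ι → LieIdeal R L) (J C : LieIdeal R L)
    (h : ∀ i, ⁅A i, J⁆ ≤ C) : ⁅(⨆ i, A i : LieIdeal R L), J⁆ ≤ C := by
  rw [LieSubmodule.lie_le_iff]
  intro x hx y hy
  refine LieSubmodule.iSup_induction A hx (motive := fun x => ⁅x, y⁆ ∈ C) ?_ ?_ ?_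
  · intro i z hz
    exact h i (LieSubmodule.lie_mem_lie hz hy)
  · show ⁅(0 : L), y⁆ ∈ C
    rw [zero_lie]; exact C.zero_mem
  · intro z w hz hw
    show ⁅z + w, y⁆ ∈ C
    rw [add_lie]; exact C.add_mem hz hw

theorem lieISupLe {ι : Type*} (J : LieIdeal R L) (A : ι → LieIdeal R L) (C : LieIdeal R L)
    (h : ∀ i, ⁅J, A i⁆ ≤ C) : ⁅J, (⨆ i, A i : LieIdeal R L)⁆ ≤ C := by
  rw [LieSubmodule.lie_comm]
  exact iSupLieLe A J C fun i => (LieSubmodule.lie_comm (A i) J) ▸ h i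

/-- Auxiliary ideal: elements whose bracket with every element of `X` lies in `C`. -/
def relIdeal (X C : LieIdeal R L) : LieIdeal R L where
  carrier := {z : L | ∀ x ∈ X, ⁅x, z⁆ ∈ C}
  add_mem' := fun {z w} hz hw x hx => by rw [lie_add]; exact C.add_mem (hz x hx) (hw x hx)
  zero_mem' := fun x hx => by rw [lie_zero]; exact C.zero_mem
  smul_mem' := fun r z hz x hx => by rw [lie_smul]; exact C.smul_mem r (hz x hx)
  lie_mem := fun {w z} hz x hx => by
    rw [leibniz_lie]
    refine C.add_mem ?_ (C.lie_mem (hz x hx))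
    have hxw : ⁅x, w⁆ ∈ X := by
      rw [← lie_skew]
      exact X.neg_mem (X.lie_mem hx)
    exact hz _ hxw

theorem mem_relIdeal {X C : LieIdeal R L} {z : L} :
    z ∈ relIdeal X C ↔ ∀ x ∈ X, ⁅x, z⁆ ∈ C := Iff.rfl

theorem lieLieLe (X Y J : LieIdeal R L) :
    ⁅X, ⁅Y, J⁆⁆ ≤ ⁅⁅X, Y⁆, J⁆ ⊔ ⁅⁅X, J⁆, Y⁆ := by
  set C : LieIdeal R L := ⁅⁅X, Y⁆, J⁆ ⊔ ⁅⁅X, J⁆, Y⁆ with hC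
  have hle : ⁅Y, J⁆ ≤ relIdeal X C := by
    rw [LieSubmodule.lie_le_iff]
    intro y hy j hj
    rw [mem_relIdeal]
    intro x hx
    rw [leibniz_lie]
    refine C.add_mem ?_ ?_
    · have h0 : ⁅⁅x, y⁆, j⁆ ∈ ⁅⁅X, Y⁆, J⁆ :=
        LieSubmodule.lie_mem_lie (LieSubmodule.lie_mem_lie hx hy) hj
      have hle2 : ⁅⁅X, Y⁆, J⁆ ≤ C := le_sup_left
      exact hle2 h0
    · have h1 : ⁅⁅x, j⁆, y⁆ ∈ ⁅⁅X, J⁆, Y⁆ :=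
        LieSubmodule.lie_mem_lie (LieSubmodule.lie_mem_lie hx hj) hy
      have h2 : ⁅y, ⁅x, j⁆⁆ ∈ ⁅⁅X, J⁆, Y⁆ := by
        rw [← lie_skew]
        exact (⁅⁅X, J⁆, Y⁆ : LieIdeal R L).neg_mem h1
      have hle3 : ⁅⁅X, J⁆, Y⁆ ≤ C := le_sup_right
      exact hle3 h2
  rw [LieSubmodule.lie_le_iff]
  intro x hx z hz
  exact mem_relIdeal.mp (hle hz) x hx

/-- The supremum of the left-normed brackets over all permutations of a list of ideals. -/
def symList (M : List (LieIdeal R L)) : LieIdeal R L :=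
  ⨆ p : {l : List (LieIdeal R L) // M.Perm l}, lnbIdeal p.1

theorem lnbLeSymList {M l : List (LieIdeal R L)} (h : M.Perm l) : lnbIdeal l ≤ symList M :=
  le_iSup (fun p : {l : List (LieIdeal R L) // M.Perm l} => lnbIdeal p.1) ⟨l, h⟩

theorem symListLe {M : List (LieIdeal R L)} {C : LieIdeal R L}
    (h : ∀ l, M.Perm l → lnbIdeal l ≤ C) : symList M ≤ C :=
  iSup_le fun p => h p.1 p.2

theorem symListLeSymList {M N : List (LieIdeal R L)} (h : N.Perm M) : symList M ≤ symList N :=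
  symListLe fun _ hl => lnbLeSymList (h.trans hl)

theorem permNeNil {α : Type*} {M l : List α} (h : M.Perm l) (hM : M ≠ []) : l ≠ [] := by
  intro hl
  subst hl
  exact hM h.eq_nil

theorem lieLnbLnbLe (B : List (LieIdeal R L)) (hB : B ≠ []) :
    ∀ A : List (LieIdeal R L), A ≠ [] →
      ⁅lnbIdeal A, lnbIdeal B⁆ ≤ symList (A ++ B) := by
  induction B using List.reverseRecOn with
  | nil => exact absurd rfl hB
  | append_singleton B' J ih =>
    intro A hA
    rcases eq_or_ne B' [] with rfl | hB'
    · rw [List.nil_append, show lnbIdeal [J] = J from rfl, ← lnbIdealAppendSingleton hA J]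
      exact lnbLeSymList (List.Perm.refl _)
    · rw [lnbIdealAppendSingleton hB' J]
      refine le_trans (lieLieLe _ _ _) (sup_le ?_ ?_)
      · refine le_trans (LieSubmodule.mono_lie_left J (ih hB' A hA)) ?_
        rw [symList]
        refine iSupLieLe _ _ _ fun p => ?_
        rw [← lnbIdealAppendSingleton (permNeNil p.2 (by simp [hA])) J]
        refine lnbLeSymList ?_
        rw [← List.append_assoc]
        exact p.2.append_right [J]
      · rw [← lnbIdealAppendSingleton hA J]
        refine le_trans (ih hB' (A ++ [J]) (by simp)) (symListLeSymList ?_)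
        rw [List.append_assoc]
        exact (List.perm_append_comm.append_left A)

theorem lieSymListSymListLe {M₁ M₂ : List (LieIdeal R L)} (h₁ : M₁ ≠ []) (h₂ : M₂ ≠ []) :
    ⁅symList M₁, symList M₂⁆ ≤ symList (M₁ ++ M₂) := by
  rw [show symList M₁ = ⨆ p : {l : List (LieIdeal R L) // M₁.Perm l}, lnbIdeal p.1 from rfl]
  refine iSupLieLe _ _ _ fun p => ?_
  rw [show symList M₂ = ⨆ q : {l : List (LieIdeal R L) // M₂.Perm l}, lnbIdeal q.1 from rfl]
  refine lieISupLe _ _ _ fun q => ?_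
  refine le_trans (lieLnbLnbLe q.1 (permNeNil q.2 h₂) p.1 (permNeNil p.2 h₁))
    (symListLeSymList ?_)
  exact p.2.append q.2

theorem BracketArr.one_le : ∀ {t : ℕ}, BracketArr t → 1 ≤ t
  | _, .leaf => le_refl 1
  | _, .node u _ => le_trans u.one_le (Nat.le_add_right _ _)

theorem evalMemSymList : ∀ {t : ℕ} (β : BracketArr t) (K : Fin t → LieIdeal R L)
    (a : Fin t → L), (∀ s, a s ∈ K s) → β.eval a ∈ symList (List.ofFn K)
  | _, .leaf, K, a, h => by
    have h1 : List.ofFn K = [K 0] := by simp [List.ofFn_succ]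
    rw [h1]
    exact lnbLeSymList (List.Perm.refl [K 0]) (h 0)
  | _, .node u v, K, a, h => by
    rw [List.ofFn_add]
    have hu := evalMemSymList u (fun i => K (Fin.castAdd _ i)) (fun i => a (Fin.castAdd _ i))
      (fun i => h _)
    have hv := evalMemSymList v (fun i => K (Fin.natAdd _ i)) (fun i => a (Fin.natAdd _ i))
      (fun i => h _)
    have hne1 : (List.ofFn fun i => K (Fin.castAdd _ i)) ≠ [] := by
      have := u.one_le
      simp only [ne_eq, List.ofFn_eq_nil_iff]
      omega
    have hne2 : (List.ofFn fun i => K (Fin.natAdd _ i)) ≠ [] := by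
      have := v.one_le
      simp only [ne_eq, List.ofFn_eq_nil_iff]
      omega
    exact lieSymListSymListLe hne1 hne2 (LieSubmodule.lie_mem_lie hu hv)

end Lie

/-- **Statement 8.** -/
theorem bracketArr_perm_mem_symBracketSum {R : Type*} [CommRing R] {L : Type*} [LieRing L]
    [LieAlgebra R L] {n : ℕ} (I : Fin n → LieIdeal R L) (a : Fin n → L)
    (ha : ∀ j, a j ∈ I j) (σ : Equiv.Perm (Fin n)) (β : BracketArr n) :
    β.eval (fun s => a (σ s)) ∈ symBracketSum I := by
  have hmem := evalMemSymList β (fun s => I (σ s)) (fun s => a (σ s)) (fun s => ha (σ s))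
  have hle : symList (List.ofFn fun s => I (σ s)) ≤ symBracketSum I := by
    refine symListLe fun l hl => ?_
    have h2 : (List.ofFn I).Perm l := ((σ.ofFn_comp_perm I).symm.trans hl)
    obtain ⟨τ, rfl⟩ := permOfFnExists I h2
    exact le_iSup (fun τ : Equiv.Perm (Fin n) => lnbIdeal (List.ofFn fun s => I (τ s))) τ
  exact hle hmem
end

section
/- Let L be a Lie algebra over a commutative ring and let I_1, …, I_n be Lie ideals of L. Let (i_1, i_2, …, i_p) be a sequence of integers with 1 ≤ i_s ≤ n such that {i_1, i_2, …, i_p} = {1, 2, …, n} (every index from 1 to n occurs). Then the left-normed bracket of ideals satisfies [[I_{i_1}, I_{i_2}], …, I_{i_p}] ≤ [[I_1, I_2], …, I_n]_S. -/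
section Aux
variable {R : Type*} [CommRing R] {L : Type*} [LieRing L] [LieAlgebra R L]

private def lnbAux (A : LieIdeal R L) (l : List (LieIdeal R L)) : LieIdeal R L :=
  l.foldl (fun acc J => ⁅acc, J⁆) A

private lemma lnbAux_mono {A B : LieIdeal R L} (h : A ≤ B) :
    ∀ l : List (LieIdeal R L), lnbAux A l ≤ lnbAux B l := by
  intro l
  induction l generalizing A B with
  | nil => exact h
  | cons c m ih => exact ih (LieSubmodule.mono_lie_left _ h)

private lemma lnbAux_sublist {l' l : List (LieIdeal R L)} (h : List.Sublist l' l) (A : LieIdeal R L) :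
    lnbAux A l ≤ lnbAux A l' := by
  induction h generalizing A with
  | slnil => exact le_rfl
  | cons c _ ih =>
      exact le_trans (lnbAux_mono ((LieSubmodule.lie_le_inf _ _).trans inf_le_left) _) (ih A)
  | cons_cons c _ ih => exact ih _

private lemma lnbAux_le_of_cons_sublist {b : LieIdeal R L} {l'' l : List (LieIdeal R L)}
    (h : List.Sublist (b :: l'') l) (A : LieIdeal R L) : lnbAux A l ≤ lnbAux b l'' := by
  induction l generalizing A with
  | nil => simp at h
  | cons c m ih =>
      cases h with
      | cons _ h' => exact ih h' _
      | cons_cons _ h' =>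
          exact le_trans
            (lnbAux_mono ((LieSubmodule.lie_le_inf _ _).trans inf_le_right) m)
            (lnbAux_sublist h' b)

private lemma lnbAux_cons_le {R : Type*} [CommRing R] {L : Type*} [LieRing L]
    [LieAlgebra R L] {b c : LieIdeal R L} {l'' m : List (LieIdeal R L)}
    (h : List.Sublist (b :: l'') (c :: m)) : lnbAux c m ≤ lnbAux b l'' := by
  cases h with
  | cons _ h' => exact lnbAux_le_of_cons_sublist h' c
  | cons_cons _ h' => exact lnbAux_sublist h' _

private lemma lnbIdeal_le_of_sublist {R : Type*} [CommRing R] {L : Type*} [LieRing L]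
    [LieAlgebra R L] {l' l : List (LieIdeal R L)} (h : List.Sublist l' l)
    (hne : l' ≠ []) : lnbIdeal l ≤ lnbIdeal l' := by
  match l', l, h with
  | [], _, _ => exact absurd rfl hne
  | b :: l'', c :: m, h => exact lnbAux_cons_le h

end Aux

/-- **Statement 9.** Let `L` be a Lie algebra over a commutative ring, `I₁, …, I_n` Lie
ideals of `L`, and `(i₁, …, i_p)` a sequence of indices in `{1, …, n}` in which every index
from `1` to `n` occurs.  Then `[[I_{i₁}, I_{i₂}], …, I_{i_p}] ≤ [[I₁, I₂], …, I_n]_S`. -/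
theorem lnb_le_symBracketSum {R : Type*} [CommRing R] {L : Type*} [LieRing L]
    [LieAlgebra R L] {n p : ℕ} (I : Fin n → LieIdeal R L) (idx : Fin p → Fin n)
    (hsurj : Function.Surjective idx) :
    lnbIdeal (List.ofFn (fun s => I (idx s))) ≤ symBracketSum I := by
  classical
  have hmap : List.ofFn (fun s => I (idx s)) = (List.ofFn idx).map I := by
    simp [List.map_ofFn]; rfl
  set js : List (Fin n) := List.ofFn idx with hjs
  set js' : List (Fin n) := js.dedup with hjs'
  have hsub : List.Sublist js' js := List.dedup_sublist js
  have hnd : js'.Nodup := List.nodup_dedup js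
  have hmem : ∀ i : Fin n, i ∈ js' := by
    intro i
    rcases hsurj i with ⟨s, hs⟩
    refine List.mem_dedup.mpr ?_
    rw [hjs, List.mem_ofFn]
    exact ⟨s, hs⟩
  have huniv : js'.toFinset = Finset.univ := Finset.eq_univ_iff_forall.mpr
    (by simpa using hmem)
  have hlen : js'.length = n := by
    have h1 : js'.toFinset.card = js'.length := List.toFinset_card_of_nodup hnd
    rw [huniv] at h1
    simpa using h1.symm
  set f : Fin n → Fin n := fun s => js'.get (Fin.cast hlen.symm s) with hf
  have hinj : Function.Injective f := by
    intro a b hab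
    have := List.nodup_iff_injective_get.mp hnd hab
    exact Fin.cast_injective _ this
  set σ : Equiv.Perm (Fin n) := Equiv.ofBijective f (Finite.injective_iff_bijective.mp hinj)
    with hσ
  have hσf : ∀ s, σ s = f s := fun s => rfl
  have hofFn : js'.map I = List.ofFn (fun s => I (σ s)) := by
    refine List.ext_get (by simp [hlen]) ?_
    intro k h1 h2
    simp only [List.get_eq_getElem, List.getElem_map, List.get_ofFn, List.getElem_ofFn]
    congr 1
  have hfinal : lnbIdeal (js'.map I) ≤ symBracketSum I := by
    rw [hofFn]
    exact le_iSup (fun τ : Equiv.Perm (Fin n) =>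
      lnbIdeal (List.ofFn (fun s => I (τ s)))) σ
  rw [hmap]
  by_cases hnil : js = []
  · rw [hnil]
    exact bot_le
  · have hne : js' ≠ [] := by
      simpa [hjs', List.dedup_eq_nil] using hnil
    have hne' : js'.map I ≠ [] := by simpa using hne
    exact le_trans (lnbIdeal_le_of_sublist (hsub.map I) hne') hfinal
end

section
/- Let L be a Lie algebra over a commutative ring and let I_1, …, I_n be Lie ideals of L with n ≥ 2. Let (i_1, …, i_p) and (j_1, …, j_q) be sequences of integers in {1, …, n} such that {i_1, …, i_p} ∪ {j_1, …, j_q} = {1, 2, …, n}. Then [[[I_{i_1}, I_{i_2}], …, I_{i_p}], [[I_{j_1}, I_{j_2}], …, I_{j_q}]] ≤ [[I_1, I_2], …, I_n]_S. -/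
section Aux

variable {R : Type*} [CommRing R] {L : Type*} [LieRing L] [LieAlgebra R L]

/-- The residual ideal `{x | ⁅x, J⁆ ⊆ T}`. -/
def lieResidual (J T : LieIdeal R L) : LieIdeal R L where
  carrier := {x : L | ∀ m ∈ J, ⁅x, m⁆ ∈ T}
  add_mem' := fun {a b} ha hb m hm => by
    rw [add_lie]; exact add_mem (ha m hm) (hb m hm)
  zero_mem' := fun m hm => by rw [zero_lie]; exact zero_mem _
  smul_mem' := fun c a ha m hm => by
    rw [smul_lie]; exact Submodule.smul_mem _ c (ha m hm)
  lie_mem := fun {x a} ha m hm => by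
    rw [lie_lie]
    exact sub_mem (T.lie_mem (ha m hm)) (ha _ (J.lie_mem hm))

lemma mem_lieResidual {J T : LieIdeal R L} {x : L} :
    x ∈ lieResidual J T ↔ ∀ m ∈ J, ⁅x, m⁆ ∈ T := Iff.rfl

lemma lie_le_iff_le_lieResidual {I J T : LieIdeal R L} :
    ⁅I, J⁆ ≤ T ↔ I ≤ lieResidual J T := by
  rw [LieSubmodule.lie_le_iff]
  exact Iff.rfl

lemma lie_lie_le (X Y Z : LieIdeal R L) :
    ⁅X, ⁅Y, Z⁆⁆ ≤ ⁅⁅X, Y⁆, Z⁆ ⊔ ⁅⁅X, Z⁆, Y⁆ := by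
  rw [LieSubmodule.lie_comm, lie_le_iff_le_lieResidual]
  rw [LieSubmodule.lie_le_iff]
  intro y hy z hz
  rw [mem_lieResidual]
  intro m hm
  have h1 : ⁅z, m⁆ ∈ ⁅X, Z⁆ := by
    rw [LieSubmodule.lie_comm]; exact LieSubmodule.lie_mem_lie hz hm
  have h3 : ⁅y, ⁅z, m⁆⁆ ∈ ⁅⁅X, Z⁆, Y⁆ := by
    rw [← lie_skew]; exact neg_mem (LieSubmodule.lie_mem_lie h1 hy)
  have h4 : ⁅y, m⁆ ∈ ⁅X, Y⁆ := by
    rw [LieSubmodule.lie_comm]; exact LieSubmodule.lie_mem_lie hy hm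
  have h6 : ⁅z, ⁅y, m⁆⁆ ∈ ⁅⁅X, Y⁆, Z⁆ := by
    rw [← lie_skew]; exact neg_mem (LieSubmodule.lie_mem_lie h4 hz)
  rw [lie_lie]
  exact sub_mem ((le_sup_right : _ ≤ ⁅⁅X,Y⁆,Z⁆ ⊔ ⁅⁅X,Z⁆,Y⁆) h3)
    ((le_sup_left : _ ≤ ⁅⁅X,Y⁆,Z⁆ ⊔ ⁅⁅X,Z⁆,Y⁆) h6)

lemma foldl_lie_mono {X Y : LieIdeal R L} (h : X ≤ Y) (Ls : List (LieIdeal R L)) :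
    Ls.foldl (fun acc J => ⁅acc, J⁆) X ≤ Ls.foldl (fun acc J => ⁅acc, J⁆) Y := by
  induction Ls generalizing X Y with
  | nil => exact h
  | cons a t ih => exact ih (LieSubmodule.mono_lie_left _ h)

lemma foldl_lie_sublist {Ks Ls : List (LieIdeal R L)} (h : List.Sublist Ls Ks) (X : LieIdeal R L) :
    Ks.foldl (fun acc J => ⁅acc, J⁆) X ≤ Ls.foldl (fun acc J => ⁅acc, J⁆) X := by
  induction h generalizing X with
  | slnil => exact le_rfl
  | cons a h ih =>
    exact le_trans (ih _) (foldl_lie_mono (LieSubmodule.lie_le_left _ _) _)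
  | cons_cons a h ih => exact ih _

lemma lnbIdeal_sublist {Ks Ls : List (LieIdeal R L)} (h : List.Sublist Ls Ks) (hne : Ls ≠ []) :
    lnbIdeal Ks ≤ lnbIdeal Ls := by
  induction h with
  | slnil => exact absurd rfl hne
  | @cons l₁ l₂ a h ih =>
    have hl₂ : l₂ ≠ [] := by
      rintro rfl
      exact hne (List.sublist_nil.mp h)
    obtain ⟨b, l₃, rfl⟩ := List.exists_cons_of_ne_nil hl₂
    refine le_trans ?_ (ih hne)
    show l₃.foldl (fun acc J => ⁅acc, J⁆) ⁅a, b⁆ ≤ l₃.foldl (fun acc J => ⁅acc, J⁆) b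
    exact foldl_lie_mono (LieSubmodule.lie_le_right _ _) _
  | @cons_cons l₁ l₂ a h ih =>
    exact foldl_lie_sublist h a

lemma lnbIdeal_append (Ks Ls : List (LieIdeal R L)) (h : Ks ≠ []) :
    lnbIdeal (Ks ++ Ls) = Ls.foldl (fun acc J => ⁅acc, J⁆) (lnbIdeal Ks) := by
  obtain ⟨a, t, rfl⟩ := List.exists_cons_of_ne_nil h
  simp [lnbIdeal, List.foldl_append]

end Aux

section Aux2
variable {R : Type*} [CommRing R] {L : Type*} [LieRing L] [LieAlgebra R L]

lemma lnbIdeal_le_symBracketSum {n m : ℕ} (hn : 0 < n) (I : Fin n → LieIdeal R L)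
    (k : Fin m → Fin n) (hk : Function.Surjective k) :
    lnbIdeal (List.ofFn (fun s => I (k s))) ≤ symBracketSum I := by
  classical
  set ks := List.ofFn k with hks
  set ds := ks.dedup with hds
  have hsub : List.Sublist (ds.map I) (ks.map I) := (ks.dedup_sublist).map I
  have hmem : ∀ x : Fin n, x ∈ ds := by
    intro x
    rcases hk x with ⟨s, rfl⟩
    exact List.mem_dedup.mpr (by simp [hks, List.mem_ofFn])
  have hnodup : ds.Nodup := ks.nodup_dedup
  have hlen : ds.length = n := by
    have h1 : ds.toFinset = Finset.univ :=
      Finset.eq_univ_iff_forall.mpr fun x => List.mem_toFinset.mpr (hmem x)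
    have h2 := List.toFinset_card_of_nodup hnodup
    rw [h1] at h2
    simpa using h2.symm
  have hinj : Function.Injective (fun i : Fin n => ds.get (Fin.cast hlen.symm i)) := by
    intro i j hij
    have := List.nodup_iff_injective_get.mp hnodup hij
    simpa [Fin.ext_iff] using this
  let σ : Equiv.Perm (Fin n) := Equiv.ofBijective _ (Finite.injective_iff_bijective.mp hinj)
  have hofFn : List.ofFn (fun s => I (σ s)) = ds.map I := by
    apply List.ext_get
    · simp [hlen]
    · intro i h1 h2
      simp [σ, Equiv.ofBijective, List.get_ofFn, List.getElem_map]
  have hne : ds.map I ≠ [] := by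
    have h0 : (⟨0, hn⟩ : Fin n) ∈ ds := hmem _
    intro hcon
    rw [List.map_eq_nil_iff] at hcon
    rw [hcon] at h0
    exact List.not_mem_nil h0
  calc lnbIdeal (List.ofFn fun s => I (k s)) = lnbIdeal (ks.map I) := by
        rw [hks, List.map_ofFn]; rfl
    _ ≤ lnbIdeal (ds.map I) := lnbIdeal_sublist hsub hne
    _ = lnbIdeal (List.ofFn fun s => I (σ s)) := (congrArg _ hofFn).symm
    _ ≤ symBracketSum I := le_iSup (fun τ : Equiv.Perm (Fin n) => lnbIdeal (List.ofFn fun s => I (τ s))) σ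

end Aux2

section Aux3
variable {R : Type*} [CommRing R] {L : Type*} [LieRing L] [LieAlgebra R L]

/-- Extend a permutation of `Fin m` to `Fin (m+1)` fixing the last element. -/
def snocPerm {m : ℕ} (τ : Equiv.Perm (Fin m)) : Equiv.Perm (Fin (m + 1)) where
  toFun := Fin.snoc (fun i => (τ i).castSucc) (Fin.last m)
  invFun := Fin.snoc (fun i => (τ.symm i).castSucc) (Fin.last m)
  left_inv := by
    intro i
    induction i using Fin.lastCases with
    | last => simp
    | cast i => simp
  right_inv := by
    intro i
    induction i using Fin.lastCases with
    | last => simp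
    | cast i => simp

@[simp] lemma snocPerm_castSucc {m : ℕ} (τ : Equiv.Perm (Fin m)) (i : Fin m) :
    snocPerm τ i.castSucc = (τ i).castSucc := by simp [snocPerm]

@[simp] lemma snocPerm_last {m : ℕ} (τ : Equiv.Perm (Fin m)) :
    snocPerm τ (Fin.last m) = Fin.last m := by simp [snocPerm]

/-- Extend a permutation of `Fin m` to `Fin (m+1)` sending `0` to the last element. -/
def consPerm {m : ℕ} (τ : Equiv.Perm (Fin m)) : Equiv.Perm (Fin (m + 1)) where
  toFun := Fin.cases (Fin.last m) (fun i => (τ i).castSucc)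
  invFun := Fin.lastCases 0 (fun i => (τ.symm i).succ)
  left_inv := by
    intro i
    induction i using Fin.cases with
    | zero => simp
    | succ i => simp
  right_inv := by
    intro i
    induction i using Fin.lastCases with
    | last => simp
    | cast i => simp

@[simp] lemma consPerm_zero {m : ℕ} (τ : Equiv.Perm (Fin m)) :
    consPerm τ 0 = Fin.last m := by simp [consPerm]

@[simp] lemma consPerm_succ {m : ℕ} (τ : Equiv.Perm (Fin m)) (i : Fin m) :
    consPerm τ i.succ = (τ i).castSucc := by simp [consPerm]

lemma shuffle {m : ℕ} (J : Fin (m + 1) → LieIdeal R L) (X : LieIdeal R L) :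
    ⁅X, lnbIdeal (List.ofFn J)⁆ ≤
      ⨆ σ : Equiv.Perm (Fin (m + 1)), lnbIdeal (X :: List.ofFn (fun s => J (σ s))) := by
  induction m generalizing X with
  | zero =>
    refine le_trans ?_ (le_iSup (fun σ : Equiv.Perm (Fin 1) =>
      lnbIdeal (X :: List.ofFn (fun s => J (σ s)))) 1)
    have h2 : List.ofFn (fun s : Fin 1 => J ((1 : Equiv.Perm (Fin 1)) s)) = [J 0] := by
      simp
    have h1 : List.ofFn J = [J 0] := by simp [List.ofFn_succ]
    rw [h1, h2]
    exact le_of_eq rfl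
  | succ m ih =>
    set Jl := J (Fin.last (m + 1)) with hJl
    set B' := lnbIdeal (List.ofFn (fun i : Fin (m + 1) => J i.castSucc)) with hB'
    have hS : lnbIdeal (List.ofFn J) = ⁅B', Jl⁆ := by
      rw [List.ofFn_succ', List.concat_eq_append,
        lnbIdeal_append _ _ (by simp)]
      rfl
    rw [hS]
    refine le_trans (lie_lie_le X B' Jl) (sup_le ?_ ?_)
    · -- ⁅⁅X, B'⁆, Jl⁆
      refine le_trans (LieSubmodule.mono_lie_left _ (ih _ X)) ?_
      rw [lie_le_iff_le_lieResidual]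
      refine iSup_le fun τ => ?_
      rw [← lie_le_iff_le_lieResidual]
      refine le_trans (le_of_eq ?_) (le_iSup (fun σ : Equiv.Perm (Fin (m + 2)) =>
        lnbIdeal (X :: List.ofFn (fun s => J (σ s)))) (snocPerm τ))
      have hl : List.ofFn (fun s : Fin (m + 2) => J (snocPerm τ s)) =
          List.ofFn (fun s : Fin (m + 1) => J ((τ s).castSucc)) ++ [Jl] := by
        rw [List.ofFn_succ' (fun s : Fin (m + 2) => J (snocPerm τ s)),
          List.concat_eq_append]
        simp [hJl]
      rw [hl]
      show ⁅lnbIdeal (X :: List.ofFn fun s => J (Fin.castSucc (τ s))), Jl⁆ = _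
      rw [show X :: (List.ofFn (fun s : Fin (m + 1) => J ((τ s).castSucc)) ++ [Jl]) =
        (X :: List.ofFn (fun s : Fin (m + 1) => J ((τ s).castSucc))) ++ [Jl] from rfl,
        lnbIdeal_append _ _ (by simp)]
      rfl
    · -- ⁅⁅X, Jl⁆, B'⁆
      refine le_trans (ih _ ⁅X, Jl⁆) (iSup_le fun τ => ?_)
      refine le_trans (le_of_eq ?_) (le_iSup (fun σ : Equiv.Perm (Fin (m + 2)) =>
        lnbIdeal (X :: List.ofFn (fun s => J (σ s)))) (consPerm τ))
      have hl : List.ofFn (fun s : Fin (m + 2) => J (consPerm τ s)) =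
          Jl :: List.ofFn (fun s : Fin (m + 1) => J ((τ s).castSucc)) := by
        rw [List.ofFn_succ (f := fun s : Fin (m + 2) => J (consPerm τ s))]
        simp [hJl]
      rw [hl]
      rfl

end Aux3

/-- **Statement 10.** Let `L` be a Lie algebra over a commutative ring and `I₁, …, I_n` Lie
ideals of `L` with `n ≥ 2`.  Let `(i₁, …, i_p)` and `(j₁, …, j_q)` (with `p, q ≥ 1`) be
sequences of indices in `{1, …, n}` such that `{i₁, …, i_p} ∪ {j₁, …, j_q} = {1, …, n}`.
Then `[[[I_{i₁}, I_{i₂}], …, I_{i_p}], [[I_{j₁}, I_{j₂}], …, I_{j_q}]]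
  ≤ [[I₁, I₂], …, I_n]_S`. -/
theorem bracket_lnb_lnb_le_symBracketSum {R : Type*} [CommRing R] {L : Type*} [LieRing L]
    [LieAlgebra R L] {n p q : ℕ} (hn : 2 ≤ n) (hp : 1 ≤ p) (hq : 1 ≤ q)
    (I : Fin n → LieIdeal R L) (idx : Fin p → Fin n) (jdx : Fin q → Fin n)
    (hcover : Set.range idx ∪ Set.range jdx = Set.univ) :
    ⁅lnbIdeal (List.ofFn (fun s => I (idx s))), lnbIdeal (List.ofFn (fun s => I (jdx s)))⁆ ≤
      symBracketSum I := by
  obtain ⟨p', rfl⟩ : ∃ p', p = p' + 1 := ⟨p - 1, by omega⟩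
  obtain ⟨q', rfl⟩ : ∃ q', q = q' + 1 := ⟨q - 1, by omega⟩
  refine le_trans (shuffle (fun s => I (jdx s)) _) (iSup_le fun σ => ?_)
  set k : Fin ((p' + 1) + (q' + 1)) → Fin n := Fin.append idx (fun s => jdx (σ s)) with hk
  have hsurj : Function.Surjective k := by
    intro x
    have hx : x ∈ Set.range idx ∪ Set.range jdx := by rw [hcover]; trivial
    rcases hx with ⟨i, rfl⟩ | ⟨j, rfl⟩
    · exact ⟨Fin.castAdd _ i, by simp [hk, Fin.append_left]⟩
    · refine ⟨Fin.natAdd _ (σ.symm j), ?_⟩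
      simp [hk, Fin.append_right]
  have hfun : (fun s => I (k s)) =
      Fin.append (fun s => I (idx s)) (fun s => I (jdx (σ s))) := by
    funext s
    induction s using Fin.addCases with
    | left i => simp [hk, Fin.append_left]
    | right j => simp [hk, Fin.append_right]
  have hlist : List.ofFn (fun s => I (k s)) =
      List.ofFn (fun s => I (idx s)) ++ List.ofFn (fun s => I (jdx (σ s))) := by
    rw [hfun, List.ofFn_fin_append]
  have heq : lnbIdeal (lnbIdeal (List.ofFn (fun s => I (idx s))) ::
      List.ofFn (fun s => I (jdx (σ s)))) = lnbIdeal (List.ofFn (fun s => I (k s))) := by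
    rw [hlist, lnbIdeal_append _ _ (by simp)]
    rfl
  rw [heq]
  exact lnbIdeal_le_symBracketSum (by omega) I k hsurj
end
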